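/- For every integer d ≥ 2 and all reals c₀ > 0, c₁ > 0, c₂ > 0, there exist constants ĉ₁ > 0 and ĉ₂ > 0, depending only on c₁, c₂, d and c₀, such that for all γ ≥ c₀ and all s ≥ 0: ω_d ∫_s^∞ γ e^{−γ c₁ V₁(r/c₂)} sinh^{d−1}(r) dr ≤ ĉ₁ e^{−γ ĉ₂ V₁(s/c₂)}. -/

import Mathlib

open MeasureTheory Real

/-- `ω_k`, the surface area of the (k−1)-dimensional Euclidean unit sphere. -/
noncomputable def omegaS (k : ℕ) : ℝ := 2 * Real.pi ^ ((k : ℝ) / 2) / Real.Gamma ((k : ℝ) / 2)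

/-- `V₁(r) := ω_d ∫₀^r sinh^{d−1}(v) dv`, the volume of a ball of radius `r` in
`d`-dimensional hyperbolic space of curvature `−1`. -/
noncomputable def V1 (d : ℕ) (r : ℝ) : ℝ :=
  omegaS d * ∫ v in (0:ℝ)..r, Real.sinh v ^ (d - 1)

namespace Stmt11Aux

open Filter

lemma omegaS_pos (d : ℕ) (hd : 1 ≤ d) : 0 < omegaS d := by
  have h2 : (0:ℝ) < (d:ℝ) / 2 := by
    have : (1:ℝ) ≤ (d:ℝ) := by exact_mod_cast hd
    linarith
  have hG := Real.Gamma_pos_of_pos h2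
  have hpow : (0:ℝ) < Real.pi ^ ((d:ℝ) / 2) := Real.rpow_pos_of_pos Real.pi_pos _
  unfold omegaS
  positivity

lemma cont_sinh_pow (n : ℕ) : Continuous fun v : ℝ => Real.sinh v ^ n :=
  Real.continuous_sinh.pow n

lemma V1_hasDerivAt (d : ℕ) (x : ℝ) :
    HasDerivAt (V1 d) (omegaS d * Real.sinh x ^ (d - 1)) x := by
  have hc := cont_sinh_pow (d - 1)
  have h : HasDerivAt (fun u => ∫ v in (0:ℝ)..u, Real.sinh v ^ (d - 1))
      (Real.sinh x ^ (d - 1)) x :=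
    intervalIntegral.integral_hasDerivAt_right (hc.intervalIntegrable _ _)
      (hc.stronglyMeasurableAtFilter _ _) hc.continuousAt
  exact h.const_mul (omegaS d)

lemma V1_nonneg (d : ℕ) (hd : 1 ≤ d) {x : ℝ} (hx : 0 ≤ x) : 0 ≤ V1 d x := by
  have h : 0 ≤ ∫ v in (0:ℝ)..x, Real.sinh v ^ (d - 1) :=
    intervalIntegral.integral_nonneg hx (fun u hu => by
      have : 0 ≤ Real.sinh u := Real.sinh_nonneg_iff.2 hu.1
      positivity)
  exact mul_nonneg (omegaS_pos d hd).le h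

lemma cosh_quad {t : ℝ} (ht : 0 ≤ t) : 1 + t ^ 2 / 2 ≤ Real.cosh t := by
  have h1 : ∫ v in (0:ℝ)..t, Real.sinh v = Real.cosh t - Real.cosh 0 :=
    intervalIntegral.integral_eq_sub_of_hasDerivAt
      (fun v _ => Real.hasDerivAt_cosh v) (Real.continuous_sinh.intervalIntegrable _ _)
  have h2 : ∫ v in (0:ℝ)..t, v ≤ ∫ v in (0:ℝ)..t, Real.sinh v :=
    intervalIntegral.integral_mono_on ht (continuous_id.intervalIntegrable _ _)
      (Real.continuous_sinh.intervalIntegrable _ _)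
      (fun v hv => Real.self_le_sinh_iff.2 hv.1)
  have h3 : ∫ v in (0:ℝ)..t, v = t ^ 2 / 2 := by
    simpa using (integral_id (a := 0) (b := t))
  rw [h3] at h2
  rw [Real.cosh_zero] at h1
  linarith

lemma sinh_le_mul_cosh {x : ℝ} (hx : 0 ≤ x) : Real.sinh x ≤ x * Real.cosh x := by
  have h1 : ∫ v in (0:ℝ)..x, Real.cosh v = Real.sinh x - Real.sinh 0 :=
    intervalIntegral.integral_eq_sub_of_hasDerivAt
      (fun v _ => Real.hasDerivAt_sinh v) (Real.continuous_cosh.intervalIntegrable _ _)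
  have h2 : ∫ v in (0:ℝ)..x, Real.cosh v ≤ ∫ v in (0:ℝ)..x, Real.cosh x :=
    intervalIntegral.integral_mono_on hx (Real.continuous_cosh.intervalIntegrable _ _)
      (continuous_const.intervalIntegrable _ _)
      (fun v hv => Real.cosh_le_cosh.2 (by
        rw [abs_of_nonneg hv.1, abs_of_nonneg hx]; exact hv.2))
  have h3 : ∫ v in (0:ℝ)..x, Real.cosh x = x * Real.cosh x := by simp [mul_comm]
  rw [Real.sinh_zero, sub_zero] at h1
  rw [h3] at h2
  linarith

lemma V1_lower (d : ℕ) (hd : 2 ≤ d) {x : ℝ} (hx : 1 ≤ x) :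
    omegaS d * (Real.sinh 1 ^ (d - 2) * (Real.cosh x - Real.cosh 1)) ≤ V1 d x := by
  have hω := omegaS_pos d (le_trans (by norm_num) hd)
  have key : Real.sinh 1 ^ (d - 2) * (Real.cosh x - Real.cosh 1)
      ≤ ∫ v in (0:ℝ)..x, Real.sinh v ^ (d - 1) := by
    have hsplit : (∫ v in (0:ℝ)..1, Real.sinh v ^ (d - 1)) +
        (∫ v in (1:ℝ)..x, Real.sinh v ^ (d - 1)) = ∫ v in (0:ℝ)..x, Real.sinh v ^ (d - 1) :=
      intervalIntegral.integral_add_adjacent_intervals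
        ((cont_sinh_pow _).intervalIntegrable _ _) ((cont_sinh_pow _).intervalIntegrable _ _)
    have h01 : 0 ≤ ∫ v in (0:ℝ)..1, Real.sinh v ^ (d - 1) :=
      intervalIntegral.integral_nonneg (by norm_num) (fun u hu => by
        have : 0 ≤ Real.sinh u := Real.sinh_nonneg_iff.2 hu.1
        positivity)
    have h1x : Real.sinh 1 ^ (d - 2) * (Real.cosh x - Real.cosh 1)
        ≤ ∫ v in (1:ℝ)..x, Real.sinh v ^ (d - 1) := by
      have hint : ∫ v in (1:ℝ)..x, Real.sinh 1 ^ (d - 2) * Real.sinh v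
          = Real.sinh 1 ^ (d - 2) * (Real.cosh x - Real.cosh 1) := by
        rw [intervalIntegral.integral_const_mul]
        congr 1
        exact intervalIntegral.integral_eq_sub_of_hasDerivAt
          (fun v _ => Real.hasDerivAt_cosh v) (Real.continuous_sinh.intervalIntegrable _ _)
      rw [← hint]
      refine intervalIntegral.integral_mono_on hx
        ((continuous_const.mul Real.continuous_sinh).intervalIntegrable _ _)
        ((cont_sinh_pow _).intervalIntegrable _ _) (fun v hv => ?_)
      have hv1 : (1:ℝ) ≤ v := hv.1
      have hs1 : (0:ℝ) < Real.sinh 1 := Real.sinh_pos_iff.2 (by norm_num)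
      have hsv : Real.sinh 1 ≤ Real.sinh v := Real.sinh_le_sinh.2 hv1
      have hne : d - 1 = (d - 2) + 1 := by omega
      rw [hne, pow_succ]
      exact mul_le_mul_of_nonneg_right (pow_le_pow_left₀ hs1.le hsv _) (hs1.le.trans hsv)
    calc Real.sinh 1 ^ (d - 2) * (Real.cosh x - Real.cosh 1)
        ≤ (∫ v in (0:ℝ)..1, Real.sinh v ^ (d - 1)) +
          (∫ v in (1:ℝ)..x, Real.sinh v ^ (d - 1)) := by linarith
      _ = _ := hsplit
  unfold V1
  exact mul_le_mul_of_nonneg_left key hω.le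

lemma V1_tendsto (d : ℕ) (hd : 2 ≤ d) : Tendsto (V1 d) atTop atTop := by
  have hω := omegaS_pos d (le_trans (by norm_num) hd)
  have hs1 : (0:ℝ) < Real.sinh 1 := Real.sinh_pos_iff.2 (by norm_num)
  have hcosh : Tendsto (fun x : ℝ => Real.cosh x) atTop atTop := by
    have h := (tendsto_pow_atTop (n := 2) (by norm_num)).atTop_div_const
      (r := (2:ℝ)) (by norm_num)
    have h2 : Tendsto (fun x : ℝ => 1 + x ^ 2 / 2) atTop atTop :=
      tendsto_atTop_add_const_left _ _ h
    exact tendsto_atTop_mono' _ (by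
      filter_upwards [eventually_ge_atTop (0:ℝ)] with x hx
      exact cosh_quad hx) h2
  have hmain : Tendsto (fun x : ℝ => omegaS d *
      (Real.sinh 1 ^ (d - 2) * (Real.cosh x - Real.cosh 1))) atTop atTop := by
    apply Tendsto.const_mul_atTop hω
    apply Tendsto.const_mul_atTop (by positivity)
    exact tendsto_atTop_add_const_right _ _ hcosh
  exact tendsto_atTop_mono' _ (by
    filter_upwards [eventually_ge_atTop (1:ℝ)] with x hx
    exact V1_lower d hd hx) hmain

/-- The key pointwise bound: `sinh(c₂ t) ≤ K sinh(t) exp(β' V1 t)`. -/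
lemma pointwise_bound (d : ℕ) (hd : 2 ≤ d) {c₂ β' : ℝ} (hc₂ : 0 < c₂) (hβ' : 0 < β') :
    ∃ K : ℝ, 0 < K ∧ ∀ t : ℝ, 0 ≤ t →
      Real.sinh (c₂ * t) ≤ K * (Real.sinh t * Real.exp (β' * V1 d t)) := by
  have hω := omegaS_pos d (le_trans (by norm_num) hd)
  have hs1 : (0:ℝ) < Real.sinh 1 := Real.sinh_pos_iff.2 (by norm_num)
  set A : ℝ := β' * (omegaS d * Real.sinh 1 ^ (d - 2)) with hA_def
  have hA : 0 < A := by positivity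
  set T : ℝ := max 1 (2 * c₂ / A + 2 * Real.cosh 1) with hT_def
  have hT1 : (1:ℝ) ≤ T := le_max_left _ _
  have hT0 : (0:ℝ) < T := by linarith
  have hTsinh : (0:ℝ) < Real.sinh T := Real.sinh_pos_iff.2 hT0
  have hT2 : 2 * c₂ / A + 2 * Real.cosh 1 ≤ T := le_max_right _ _
  have hcoshT : (1:ℝ) ≤ Real.cosh (c₂ * T) := Real.one_le_cosh _
  refine ⟨max (c₂ * Real.cosh (c₂ * T)) (1 / Real.sinh T), by positivity, fun t ht => ?_⟩
  set K := max (c₂ * Real.cosh (c₂ * T)) (1 / Real.sinh T) with hK_def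
  have hK0 : 0 < K := by positivity
  have hV1nn : 0 ≤ V1 d t := V1_nonneg d (by omega) ht
  have hexp1 : (1:ℝ) ≤ Real.exp (β' * V1 d t) := Real.one_le_exp (by positivity)
  have hsinht : 0 ≤ Real.sinh t := Real.sinh_nonneg_iff.2 ht
  rcases le_total t T with hcase | hcase
  · -- small t
    have h1 : Real.sinh (c₂ * t) ≤ (c₂ * t) * Real.cosh (c₂ * t) :=
      sinh_le_mul_cosh (by positivity)
    have h2 : Real.cosh (c₂ * t) ≤ Real.cosh (c₂ * T) := Real.cosh_le_cosh.2 (by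
      rw [abs_of_nonneg (by positivity), abs_of_nonneg (by positivity)]
      exact mul_le_mul_of_nonneg_left hcase hc₂.le)
    have h3 : t ≤ Real.sinh t := Real.self_le_sinh_iff.2 ht
    have hKK : c₂ * Real.cosh (c₂ * T) ≤ K := le_max_left _ _
    calc Real.sinh (c₂ * t) ≤ (c₂ * t) * Real.cosh (c₂ * t) := h1
      _ ≤ (c₂ * Real.cosh (c₂ * T)) * t := by
          nlinarith [mul_le_mul_of_nonneg_left h2 (mul_nonneg hc₂.le ht)]
      _ ≤ K * Real.sinh t := mul_le_mul hKK h3 ht hK0.le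
      _ ≤ K * (Real.sinh t * Real.exp (β' * V1 d t)) := by
          rw [← mul_assoc]
          nlinarith [mul_le_mul_of_nonneg_left hexp1 (mul_nonneg hK0.le hsinht)]
  · -- large t
    have ht1 : (1:ℝ) ≤ t := hT1.trans hcase
    have hst : Real.sinh T ≤ Real.sinh t := Real.sinh_le_sinh.2 hcase
    have hKs : (1:ℝ) ≤ K * Real.sinh t := by
      have hKK : 1 / Real.sinh T ≤ K := le_max_right _ _
      have := mul_le_mul hKK hst hTsinh.le (by positivity)
      calc (1:ℝ) = (1 / Real.sinh T) * Real.sinh T := by field_simp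
        _ ≤ K * Real.sinh t := this
    have hse : Real.sinh (c₂ * t) ≤ Real.exp (c₂ * t) := by
      rw [Real.sinh_eq]
      have := Real.exp_pos (-(c₂ * t))
      have := Real.exp_pos (c₂ * t)
      linarith
    have hC1 : (1:ℝ) ≤ Real.cosh 1 := Real.one_le_cosh 1
    have hct : c₂ * t ≤ β' * V1 d t := by
      have hlow := V1_lower d hd ht1
      have hmul : β' * (omegaS d * (Real.sinh 1 ^ (d - 2) * (Real.cosh t - Real.cosh 1)))
          ≤ β' * V1 d t := mul_le_mul_of_nonneg_left hlow hβ'.le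
      have hmul' : A * (Real.cosh t - Real.cosh 1) ≤ β' * V1 d t := by
        rw [hA_def]; linarith [hmul]
      have hq := cosh_quad (le_trans (by norm_num) ht1)
      -- from T ≥ 2c₂/A + 2 cosh 1 : A*T ≥ 2c₂ + 2A cosh 1
      have hAT : 2 * c₂ + 2 * A * Real.cosh 1 ≤ A * T := by
        have h := mul_le_mul_of_nonneg_left hT2 hA.le
        rw [mul_add] at h
        have : A * (2 * c₂ / A) = 2 * c₂ := by field_simp
        linarith [h]
      -- A * t^2 ≥ A*T*t ≥ (2c₂ + 2A cosh1) t ≥ 2c₂ t + 2A cosh 1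
      have ht0 : (0:ℝ) ≤ t := le_trans (by norm_num) ht1
      have h1 : A * (T * t) ≤ A * (t * t) :=
        mul_le_mul_of_nonneg_left (mul_le_mul_of_nonneg_right hcase ht0) hA.le
      have h2 : (2 * c₂ + 2 * A * Real.cosh 1) * t ≤ A * T * t :=
        mul_le_mul_of_nonneg_right hAT ht0
      have h3 : 2 * A * Real.cosh 1 ≤ 2 * A * Real.cosh 1 * t :=
        le_mul_of_one_le_right (by positivity) ht1
      have h4 : A * (1 + t ^ 2 / 2) ≤ A * Real.cosh t := mul_le_mul_of_nonneg_left hq hA.le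
      nlinarith [h1, h2, h3, h4, hmul', hA.le]
    calc Real.sinh (c₂ * t) ≤ Real.exp (c₂ * t) := hse
      _ ≤ Real.exp (β' * V1 d t) := Real.exp_le_exp.2 hct
      _ ≤ K * (Real.sinh t * Real.exp (β' * V1 d t)) := by
          rw [← mul_assoc]
          nlinarith [Real.exp_pos (β' * V1 d t)]

end Stmt11Aux

open Stmt11Aux Filter

/-- Lemma 8.1: for all `c₀, c₁, c₂ > 0` there exist `chat₁, chat₂ > 0` such that
for all `γ ≥ c₀` and `s ≥ 0`,
`ω_d ∫_s^∞ γ e^{−γ c₁ V₁(r/c₂)} sinh^{d−1}(r) dr ≤ chat₁ e^{−γ chat₂ V₁(s/c₂)}`. -/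
theorem stmt11 (d : ℕ) (hd : 2 ≤ d) (c₀ c₁ c₂ : ℝ) (hc₀ : 0 < c₀) (hc₁ : 0 < c₁)
    (hc₂ : 0 < c₂) :
    ∃ chat₁ chat₂ : ℝ, 0 < chat₁ ∧ 0 < chat₂ ∧
      ∀ γ : ℝ, c₀ ≤ γ → ∀ s : ℝ, 0 ≤ s →
        omegaS d *
            ∫ r in Set.Ioi s, γ * Real.exp (-γ * c₁ * V1 d (r / c₂)) * Real.sinh r ^ (d - 1)
          ≤ chat₁ * Real.exp (-γ * chat₂ * V1 d (s / c₂)) := by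
  have hω := omegaS_pos d (le_trans (by norm_num) hd)
  set n : ℕ := d - 1 with hn_def
  have hn1 : 1 ≤ n := by omega
  have hncast : (1:ℝ) ≤ (n:ℝ) := by exact_mod_cast hn1
  set β : ℝ := c₀ * c₁ / 2 with hβ_def
  have hβ : 0 < β := by positivity
  set β' : ℝ := β / n with hβ'_def
  have hβ' : 0 < β' := by positivity
  obtain ⟨K, hK, hKb⟩ := pointwise_bound d hd hc₂ hβ'
  set Kn : ℝ := K ^ n with hKn_def
  have hKn : 0 < Kn := by positivity
  refine ⟨2 * Kn * c₂ / c₁, c₁ / 2, by positivity, by positivity, ?_⟩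
  intro γ hγ s hs
  have hγ0 : 0 < γ := hc₀.trans_le hγ
  set a : ℝ := γ * (c₁ / 2) with ha_def
  have ha : 0 < a := by positivity
  set g : ℝ → ℝ := fun r => -Real.exp (-(a * V1 d (r / c₂))) with hg_def
  set g' : ℝ → ℝ := fun r =>
    a * (omegaS d * Real.sinh (r / c₂) ^ n) * (1 / c₂) * Real.exp (-(a * V1 d (r / c₂)))
    with hg'_def
  have hderiv : ∀ r : ℝ, HasDerivAt g (g' r) r := by
    intro r
    have h1 : HasDerivAt (fun x : ℝ => x / c₂) (1 / c₂) r := (hasDerivAt_id r).div_const c₂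
    have h2 : HasDerivAt (fun x : ℝ => V1 d (x / c₂))
        (omegaS d * Real.sinh (r / c₂) ^ n * (1 / c₂)) r := by
      have := (V1_hasDerivAt d (r / c₂)).comp r h1
      simpa [hn_def, Function.comp_def] using this
    have h3 := ((h2.const_mul a).neg).exp.neg
    convert h3 using 1
    · rfl
    · rfl
    · rfl
    simp only [hg'_def, Pi.neg_apply]
    ring
  have hcont : ContinuousWithinAt g (Set.Ici s) s :=
    (hderiv s).continuousAt.continuousWithinAt
  have hg'nonneg : ∀ r ∈ Set.Ioi s, 0 ≤ g' r := by
    intro r hr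
    have hr0 : 0 < r := lt_of_le_of_lt hs hr
    have hsh : 0 ≤ Real.sinh (r / c₂) := Real.sinh_nonneg_iff.2 (by positivity)
    have := Real.exp_pos (-(a * V1 d (r / c₂)))
    simp only [hg'_def]
    positivity
  have htends : Tendsto g atTop (nhds 0) := by
    have h1 : Tendsto (fun r : ℝ => V1 d (r / c₂)) atTop atTop :=
      (V1_tendsto d hd).comp (tendsto_id.atTop_div_const hc₂)
    have h2 : Tendsto (fun r : ℝ => -(a * V1 d (r / c₂))) atTop atBot := by
      apply Filter.tendsto_neg_atBot_iff.2
      exact h1.const_mul_atTop ha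
    have h3 : Tendsto (fun r : ℝ => Real.exp (-(a * V1 d (r / c₂)))) atTop (nhds 0) :=
      Real.tendsto_exp_atBot.comp h2
    have := h3.neg
    simpa using this
  have hIdent : ∫ r in Set.Ioi s, g' r = Real.exp (-(a * V1 d (s / c₂))) := by
    have h := integral_Ioi_of_hasDerivAt_of_nonneg hcont (fun x _ => hderiv x) hg'nonneg htends
    simp only [hg_def] at h
    rw [h]; ring
  have hInt : IntegrableOn g' (Set.Ioi s) volume :=
    integrableOn_Ioi_deriv_of_nonneg hcont (fun x _ => hderiv x) hg'nonneg htends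
  set C : ℝ := Kn * (2 * c₂ / (c₁ * omegaS d)) with hC_def
  have hcmp : ∀ r ∈ Set.Ioi s,
      γ * Real.exp (-γ * c₁ * V1 d (r / c₂)) * Real.sinh r ^ n ≤ C * g' r := by
    intro r hr
    have hr0 : 0 < r := lt_of_le_of_lt hs hr
    have htnn : (0:ℝ) ≤ r / c₂ := by positivity
    have hVnn : 0 ≤ V1 d (r / c₂) := V1_nonneg d (by omega) htnn
    have hpt := hKb (r / c₂) htnn
    have hrc : c₂ * (r / c₂) = r := by field_simp
    rw [hrc] at hpt
    have hshr : 0 ≤ Real.sinh r := Real.sinh_nonneg_iff.2 hr0.le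
    have hsh : 0 ≤ Real.sinh (r / c₂) := Real.sinh_nonneg_iff.2 htnn
    have hpow : Real.sinh r ^ n ≤
        Kn * (Real.sinh (r / c₂) ^ n * Real.exp (β * V1 d (r / c₂))) := by
      have h := pow_le_pow_left₀ hshr hpt n
      have hnβ : (n:ℝ) * (β' * V1 d (r / c₂)) = β * V1 d (r / c₂) := by
        rw [hβ'_def]
        field_simp
      calc Real.sinh r ^ n
          ≤ (K * (Real.sinh (r / c₂) * Real.exp (β' * V1 d (r / c₂)))) ^ n := h
        _ = Kn * (Real.sinh (r / c₂) ^ n * Real.exp (β' * V1 d (r / c₂)) ^ n) := by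
            rw [hKn_def, mul_pow, mul_pow]
        _ = Kn * (Real.sinh (r / c₂) ^ n * Real.exp (β * V1 d (r / c₂))) := by
            rw [← Real.exp_nat_mul, hnβ]
    have hexpcmb : Real.exp (-γ * c₁ * V1 d (r / c₂)) * Real.exp (β * V1 d (r / c₂))
        ≤ Real.exp (-(a * V1 d (r / c₂))) := by
      rw [← Real.exp_add]
      apply Real.exp_le_exp.2
      have : β ≤ a := by
        rw [hβ_def, ha_def]
        nlinarith
      nlinarith
    have hCg : C * g' r =
        Kn * γ * (Real.sinh (r / c₂) ^ n * Real.exp (-(a * V1 d (r / c₂)))) := by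
      simp only [hC_def, hg'_def, ha_def]
      field_simp
    rw [hCg]
    calc γ * Real.exp (-γ * c₁ * V1 d (r / c₂)) * Real.sinh r ^ n
        ≤ γ * Real.exp (-γ * c₁ * V1 d (r / c₂)) *
          (Kn * (Real.sinh (r / c₂) ^ n * Real.exp (β * V1 d (r / c₂)))) := by
          apply mul_le_mul_of_nonneg_left hpow
          positivity
      _ = Kn * γ * (Real.sinh (r / c₂) ^ n *
          (Real.exp (-γ * c₁ * V1 d (r / c₂)) * Real.exp (β * V1 d (r / c₂)))) := by ring
      _ ≤ Kn * γ * (Real.sinh (r / c₂) ^ n * Real.exp (-(a * V1 d (r / c₂)))) := by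
          apply mul_le_mul_of_nonneg_left _ (by positivity)
          exact mul_le_mul_of_nonneg_left hexpcmb (by positivity)
  have hmono : (∫ r in Set.Ioi s, γ * Real.exp (-γ * c₁ * V1 d (r / c₂)) * Real.sinh r ^ n)
      ≤ ∫ r in Set.Ioi s, C * g' r := by
    apply integral_mono_of_nonneg
    · rw [Filter.EventuallyLE, ae_restrict_iff' measurableSet_Ioi]
      filter_upwards with r hr
      have hr0 : 0 < r := lt_of_le_of_lt hs hr
      have hshr : 0 ≤ Real.sinh r := Real.sinh_nonneg_iff.2 hr0.le
      have := Real.exp_pos (-γ * c₁ * V1 d (r / c₂))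
      positivity
    · exact (hInt.const_mul C)
    · rw [Filter.EventuallyLE, ae_restrict_iff' measurableSet_Ioi]
      filter_upwards with r hr
      exact hcmp r hr
  have hCint : ∫ r in Set.Ioi s, C * g' r = C * Real.exp (-(a * V1 d (s / c₂))) := by
    rw [integral_const_mul, hIdent]
  have hfinal : omegaS d * (C * Real.exp (-(a * V1 d (s / c₂))))
      = 2 * Kn * c₂ / c₁ * Real.exp (-γ * (c₁ / 2) * V1 d (s / c₂)) := by
    have harg : -(a * V1 d (s / c₂)) = -γ * (c₁ / 2) * V1 d (s / c₂) := by
      rw [ha_def]; ring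
    rw [harg, hC_def]
    field_simp
  calc omegaS d *
        ∫ r in Set.Ioi s, γ * Real.exp (-γ * c₁ * V1 d (r / c₂)) * Real.sinh r ^ (d - 1)
      ≤ omegaS d * ∫ r in Set.Ioi s, C * g' r := by
        apply mul_le_mul_of_nonneg_left _ hω.le
        rw [hCint] at hmono ⊢
        exact hmono
    _ = omegaS d * (C * Real.exp (-(a * V1 d (s / c₂)))) := by rw [hCint]
    _ = 2 * Kn * c₂ / c₁ * Real.exp (-γ * (c₁ / 2) * V1 d (s / c₂)) := hfinal
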